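/- Let G be a finite simple graph, s ≥ 1 an integer, σ a linear ordering of its vertices, and k ≥ 1. Then G contains an s-club of size k if and only if there exists a vertex v such that the induced subgraph G[Q_s^σ[v]] contains an s-club of size k. -/
import Mathlib


/-- `C` is an `s`-club in `G`: any two vertices of `C` have distance at most `s`
in the induced subgraph `G[C]`. -/
def IsSClub {V : Type*} (G : SimpleGraph V) (s : ℕ) (C : Set V) : Prop :=
  ∀ u v : C, (G.induce C).edist u v ≤ s

/-- The `x`-th neighborhood of `v` in `G`: vertices `u` with `1 ≤ dist_G(u,v) ≤ x`. -/
def xNbhd {V : Type*} (G : SimpleGraph V) (x : ℕ) (v : V) : Set V :=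
  {u | 1 ≤ G.edist u v ∧ G.edist u v ≤ x}

/-- The set of vertices appearing at or after `v` in the ordering `σ`. -/
def laterSet {V : Type*} (σ : V → ℕ) (v : V) : Set V := {u | σ v ≤ σ u}

theorem mem_laterSet_self {V : Type*} (σ : V → ℕ) (v : V) : v ∈ laterSet σ v :=
  le_refl (σ v)

/-- `Q_x^σ[v]`: the vertex `v` together with the `x`-th neighborhood of `v` in the
subgraph induced by `v` and the vertices appearing after `v` in the ordering `σ`. -/
def Qx {V : Type*} (G : SimpleGraph V) (σ : V → ℕ) (x : ℕ) (v : V) : Set V :=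
  insert v (Subtype.val ''
    (xNbhd (G.induce (laterSet σ v)) x ⟨v, mem_laterSet_self σ v⟩))

lemma edist_map_le {V W : Type*} {G : SimpleGraph V} {H : SimpleGraph W}
    (f : G →g H) (u v : V) : H.edist (f u) (f v) ≤ G.edist u v := by
  rcases eq_or_ne (G.edist u v) ⊤ with h | h
  · simp [h]
  · obtain ⟨p, hp⟩ := SimpleGraph.exists_walk_of_edist_ne_top h
    calc H.edist (f u) (f v) ≤ ((p.map f).length : ℕ∞) := SimpleGraph.edist_le _
      _ = (p.length : ℕ∞) := by rw [SimpleGraph.Walk.length_map]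
      _ = G.edist u v := hp

lemma edist_iso {V W : Type*} {G : SimpleGraph V} {H : SimpleGraph W}
    (f : G ≃g H) (u v : V) : H.edist (f u) (f v) = G.edist u v := by
  refine le_antisymm (edist_map_le f.toHom u v) ?_
  have := edist_map_le f.symm.toHom (f u) (f v)
  simpa using this

/-- The iso between a doubly induced subgraph and the induced subgraph on the image. -/
noncomputable def induceInduceIso {V : Type*} (G : SimpleGraph V) (A : Set V) (B : Set A) :
    (G.induce A).induce B ≃g G.induce (Subtype.val '' B) where
  toEquiv := Equiv.Set.image Subtype.val B Subtype.val_injective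
  map_rel_iff' := Iff.rfl

lemma isSClub_induce_iff {V : Type*} (G : SimpleGraph V) (s : ℕ) (A : Set V) (B : Set A) :
    IsSClub (G.induce A) s B ↔ IsSClub G s (Subtype.val '' B) := by
  let e := induceInduceIso G A B
  constructor
  · intro h u w
    obtain ⟨u', rfl⟩ := e.toEquiv.surjective u
    obtain ⟨w', rfl⟩ := e.toEquiv.surjective w
    exact (edist_iso e u' w').trans_le (h u' w')
  · intro h u w
    exact (edist_iso e u w) ▸ h (e u) (e w)

theorem stmt_8 {V : Type*} [Fintype V] (G : SimpleGraph V) (s : ℕ) (hs : 1 ≤ s)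
    (σ : V → ℕ) (hσ : Function.Injective σ) (k : ℕ) (hk : 1 ≤ k) :
    (∃ C : Set V, IsSClub G s C ∧ C.ncard = k) ↔
    (∃ v : V, ∃ C : Set (Qx G σ s v),
      IsSClub (G.induce (Qx G σ s v)) s C ∧ C.ncard = k) := by
  constructor
  · rintro ⟨C, hC, hCk⟩
    have hne : C.Nonempty := by
      apply Set.nonempty_of_ncard_ne_zero
      omega
    obtain ⟨v, hvC, hmin⟩ := Set.exists_min_image C σ (Set.toFinite C) hne
    have hsub : C ⊆ laterSet σ v := fun u hu => hmin u hu
    have hQ : C ⊆ Qx G σ s v := by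
      intro u hu
      by_cases h : u = v
      · exact h ▸ Set.mem_insert _ _
      · refine Set.mem_insert_iff.mpr (Or.inr ⟨⟨u, hsub hu⟩, ⟨?_, ?_⟩, rfl⟩)
        · refine Order.one_le_iff_pos.mpr (SimpleGraph.edist_pos_of_ne ?_)
          simp [Subtype.ext_iff, h]
        · calc (G.induce (laterSet σ v)).edist ⟨u, hsub hu⟩ ⟨v, mem_laterSet_self σ v⟩
              ≤ (G.induce C).edist ⟨u, hu⟩ ⟨v, hvC⟩ :=
                edist_map_le (SimpleGraph.induceHom
                  (SimpleGraph.Hom.id (G := G)) (fun x hx => hsub hx)) ⟨u, hu⟩ ⟨v, hvC⟩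
            _ ≤ s := hC ⟨u, hu⟩ ⟨v, hvC⟩
    refine ⟨v, Subtype.val ⁻¹' C, ?_, ?_⟩
    · rw [isSClub_induce_iff]
      rwa [Subtype.image_preimage_coe, Set.inter_eq_self_of_subset_right hQ]
    · rw [← Set.ncard_image_of_injective _ Subtype.val_injective,
        Subtype.image_preimage_coe, Set.inter_eq_self_of_subset_right hQ, hCk]
  · rintro ⟨v, C, hC, hCk⟩
    refine ⟨Subtype.val '' C, (isSClub_induce_iff _ _ _ _).mp hC, ?_⟩
    rw [Set.ncard_image_of_injective _ Subtype.val_injective, hCk]
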